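/- Let p be a prime. Then the polynomial H(X) = X^p + X^{p−1} − 1 is irreducible over the field F_p = Z/pZ. -/

import Mathlib

open Polynomial IntermediateField

lemma artin_schreier_pow_aux {p : ℕ} [Fact p.Prime] {K : Type*} [Field K]
    [Algebra (ZMod p) K] (α : K) (hα : α ^ p = α + 1) (n : ℕ) :
    α ^ p ^ n = α + n := by
  have hcharK : CharP K p := charP_of_injective_algebraMap
    (algebraMap (ZMod p) K).injective p
  induction n with
  | zero => simp
  | succ n ih =>
    have : α ^ p ^ (n + 1) = (α ^ p ^ n) ^ p := by
      rw [← pow_mul, pow_succ]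
    rw [this, ih, add_pow_char, hα]
    have hn : ((n : K)) ^ p = (n : K) := by
      rw [← map_natCast (algebraMap (ZMod p) K) n, ← map_pow, ZMod.pow_card]
    rw [hn]
    push_cast
    ring

/-- Lemma: for any prime `p`, the polynomial
`H(X) = X^p + X^{p-1} - 1` is irreducible over `F_p = ℤ/pℤ`. -/
theorem xp_add_xpow_pred_sub_one_irreducible
    (p : ℕ) [Fact p.Prime] :
    Irreducible (X ^ p + X ^ (p - 1) - 1 : Polynomial (ZMod p)) := by
  have hp := (Fact.out : p.Prime)
  have hp2 : 2 ≤ p := hp.two_le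
  set H : (ZMod p)[X] := X ^ p + X ^ (p - 1) - 1 with hH
  have hdegH : H.natDegree = p := by
    rw [hH]
    compute_degree!
    rw [if_neg (by omega), if_neg (by omega)]
    simp
  have hmonic : H.Monic := by
    rw [hH]
    monicity!
    rw [if_neg (by omega), if_neg (by omega)]
    simp
  have hHne : H ≠ 0 := hmonic.ne_zero
  set K := AlgebraicClosure (ZMod p)
  obtain ⟨β, hβ⟩ : ∃ β : K, (aeval β) H = 0 := by
    obtain ⟨β, hβ⟩ := IsAlgClosed.exists_root (H.map (algebraMap (ZMod p) K))
      (by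
        rw [degree_map, degree_eq_natDegree hHne, hdegH]
        simp [hp.ne_zero])
    exact ⟨β, by rwa [aeval_def, ← eval_map, ← IsRoot.def]⟩
  have hβeq : β ^ p + β ^ (p - 1) = 1 := by
    have h := hβ
    rw [hH] at h
    simp only [map_sub, map_add, map_pow, aeval_X, map_one] at h
    linear_combination h
  have hβ0 : β ≠ 0 := by
    intro h
    rw [h, zero_pow (by omega), zero_pow (by omega)] at hβeq
    simpa using hβeq
  set α := β⁻¹ with hαdef
  have hα0 : α ≠ 0 := inv_ne_zero hβ0
  have hpow : β ^ (p - 1) * β = β ^ p := by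
    rw [← pow_succ]
    congr 1
    omega
  have hαp : α ^ p = α + 1 := by
    rw [hαdef, inv_pow]
    rw [inv_eq_one_div, div_eq_iff (pow_ne_zero _ hβ0)]
    linear_combination -hβeq - β ^ (p - 1) * inv_mul_cancel₀ hβ0 + β⁻¹ * hpow
  have hint : IsIntegral (ZMod p) β := ⟨H, hmonic, by rwa [aeval_def] at hβ⟩
  set d := (minpoly (ZMod p) β).natDegree with hd
  -- β ^ (p ^ d) = β
  have hfd : FiniteDimensional (ZMod p) (ZMod p)⟮β⟯ :=
    IntermediateField.adjoin.finiteDimensional hint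
  have hfin : Module.finrank (ZMod p) (ZMod p)⟮β⟯ = d :=
    IntermediateField.adjoin.finrank hint
  have : Finite ((ZMod p)⟮β⟯) := Module.finite_of_finite (ZMod p)
  have : Fintype ((ZMod p)⟮β⟯) := Fintype.ofFinite _
  have hcard : Fintype.card ((ZMod p)⟮β⟯) = p ^ d := by
    rw [Module.card_eq_pow_finrank (K := ZMod p), ZMod.card, hfin]
  have hβpow : β ^ p ^ d = β := by
    have hg := FiniteField.pow_card (IntermediateField.AdjoinSimple.gen (ZMod p) β)
    rw [hcard] at hg
    have := congrArg (algebraMap ((ZMod p)⟮β⟯) K) hg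
    simpa using this
  -- deduce p ∣ d
  have hαpow : α ^ p ^ d = α + d := artin_schreier_pow_aux α hαp d
  have hβα : β = α⁻¹ := by rw [hαdef, inv_inv]
  have hdcast : (d : K) = 0 := by
    have h1 : (α + d)⁻¹ = α⁻¹ := by
      rw [← hαpow, ← inv_pow, ← hβα, hβpow, hβα]
    have h2 : α + (d : K) = α + 0 := by rw [add_zero]; exact inv_injective h1
    exact (add_right_inj α).mp h2
  have hpd : p ∣ d := by
    have hz : (d : ZMod p) = 0 := by
      apply (algebraMap (ZMod p) K).injective
      rw [map_natCast, map_zero]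
      exact hdcast
    exact (ZMod.natCast_eq_zero_iff d p).mp hz
  have hdvd : minpoly (ZMod p) β ∣ H := minpoly.dvd _ _ (by rwa [aeval_def] at hβ)
  have hdle : d ≤ p := by
    rw [← hdegH]
    exact natDegree_le_of_dvd hdvd hHne
  have hdpos : 0 < d := minpoly.natDegree_pos hint
  have hdp : d = p := le_antisymm hdle (Nat.le_of_dvd hdpos hpd)
  -- minpoly = H
  obtain ⟨c, hc⟩ := hdvd
  have hmne : minpoly (ZMod p) β ≠ 0 := minpoly.ne_zero hint
  have hcne : c ≠ 0 := by
    intro h; rw [h, mul_zero] at hc; exact hHne hc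
  have hcdeg : c.natDegree = 0 := by
    have := hc ▸ hdegH
    rw [natDegree_mul hmne hcne] at this
    omega
  have hcC : c = C (c.coeff 0) := eq_C_of_natDegree_eq_zero hcdeg
  have hlead : c.coeff 0 = 1 := by
    have := congrArg leadingCoeff hc
    rw [hmonic.leadingCoeff, leadingCoeff_mul, (minpoly.monic hint).leadingCoeff,
      one_mul, hcC] at this
    simpa using this.symm
  have hHeq : H = minpoly (ZMod p) β := by
    rw [hc, hcC, hlead, map_one, mul_one]
  rw [hHeq]
  exact minpoly.irreducible hint
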